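/- Let a, b, c, n be positive integers with a² + b² = 2c², gcd(n, 2abc) = 1, n square-free, and let d₁, d₂, d₃ be square-free integers with d₁d₂d₃ a perfect square. If the system of equations -b²n t² + d₂u₂² - d₃u₃² = 0, -a²n t² + d₃u₃² - d₁u₁² = 0, 2c²n t² + d₁u₁² - d₂u₂² = 0 has a nonzero solution in ℚ₂⁴, then d₁ and d₂ have the same parity (both even or both odd). -/

import Mathlib

section Stmt4Aux

lemma stmt4_two_dvd_cast (k : ℤ) : (2:ℤ_[2]) ∣ (k : ℤ_[2]) ↔ (2:ℤ) ∣ k := by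
  have h1 := PadicInt.norm_int_lt_one_iff_dvd (p := 2) k
  have h2 := PadicInt.norm_lt_one_iff_dvd (p := 2) (k : ℤ_[2])
  simp only [Nat.cast_ofNat] at h1 h2
  rw [← h2, h1]

lemma stmt4_two_dvd_cast_nat (m : ℕ) : (2:ℤ_[2]) ∣ (m : ℤ_[2]) ↔ 2 ∣ m := by
  have h : ((m : ℤ) : ℤ_[2]) = (m : ℤ_[2]) := by push_cast; ring
  rw [← h, stmt4_two_dvd_cast]
  exact Int.natCast_dvd_natCast

lemma stmt4_prime_two : Prime (2 : ℤ_[2]) := by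
  have := PadicInt.prime_p (p := 2)
  simpa using this

lemma stmt4_lift (A C N : ℕ) (D₁ D₂ D₃ : ℤ) (t u₁ u₂ u₃ : ℚ_[2])
    (hnz : ¬(t = 0 ∧ u₁ = 0 ∧ u₂ = 0 ∧ u₃ = 0))
    (E2 : (A:ℚ_[2])^2 * N * t^2 + D₁*u₁^2 = D₃*u₃^2)
    (E3 : 2*(C:ℚ_[2])^2 * N * t^2 + D₁*u₁^2 = D₂*u₂^2) :
    ∃ T U₁ U₂ U₃ : ℤ_[2],
      ¬((2:ℤ_[2]) ∣ T ∧ (2:ℤ_[2]) ∣ U₁ ∧ (2:ℤ_[2]) ∣ U₂ ∧ (2:ℤ_[2]) ∣ U₃) ∧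
      (A:ℤ_[2])^2 * N * T^2 + D₁*U₁^2 = D₃*U₃^2 ∧
      2*(C:ℤ_[2])^2 * N * T^2 + D₁*U₁^2 = D₂*U₂^2 := by
  -- pick a coordinate of maximal norm
  obtain ⟨x₀, hmem, hbt, hb1, hb2, hb3⟩ :
      ∃ x₀ : ℚ_[2], (x₀ = t ∨ x₀ = u₁ ∨ x₀ = u₂ ∨ x₀ = u₃) ∧
        ‖t‖ ≤ ‖x₀‖ ∧ ‖u₁‖ ≤ ‖x₀‖ ∧ ‖u₂‖ ≤ ‖x₀‖ ∧ ‖u₃‖ ≤ ‖x₀‖ := by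
    rcases le_total (max ‖t‖ ‖u₁‖) (max ‖u₂‖ ‖u₃‖) with h | h
    · rcases le_total ‖u₂‖ ‖u₃‖ with h' | h'
      · have hm : max ‖u₂‖ ‖u₃‖ = ‖u₃‖ := max_eq_right h'
        exact ⟨u₃, by tauto, (le_max_left _ _).trans (h.trans_eq hm),
          (le_max_right _ _).trans (h.trans_eq hm), h', le_rfl⟩
      · have hm : max ‖u₂‖ ‖u₃‖ = ‖u₂‖ := max_eq_left h'
        exact ⟨u₂, by tauto, (le_max_left _ _).trans (h.trans_eq hm),
          (le_max_right _ _).trans (h.trans_eq hm), le_rfl, h'⟩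
    · rcases le_total ‖t‖ ‖u₁‖ with h' | h'
      · have hm : max ‖t‖ ‖u₁‖ = ‖u₁‖ := max_eq_right h'
        exact ⟨u₁, by tauto, h', le_rfl,
          (le_max_left _ _).trans (h.trans_eq hm), (le_max_right _ _).trans (h.trans_eq hm)⟩
      · have hm : max ‖t‖ ‖u₁‖ = ‖t‖ := max_eq_left h'
        exact ⟨t, by tauto, le_rfl, h',
          (le_max_left _ _).trans (h.trans_eq hm), (le_max_right _ _).trans (h.trans_eq hm)⟩
  have hx0 : x₀ ≠ 0 := by
    intro h0
    rw [h0, norm_zero] at hbt hb1 hb2 hb3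
    exact hnz ⟨norm_le_zero_iff.mp hbt, norm_le_zero_iff.mp hb1,
      norm_le_zero_iff.mp hb2, norm_le_zero_iff.mp hb3⟩
  have hxpos : 0 < ‖x₀‖ := norm_pos_iff.mpr hx0
  have hT : ‖t/x₀‖ ≤ 1 := by rw [norm_div]; exact div_le_one_of_le₀ hbt (norm_nonneg _)
  have hU1 : ‖u₁/x₀‖ ≤ 1 := by rw [norm_div]; exact div_le_one_of_le₀ hb1 (norm_nonneg _)
  have hU2 : ‖u₂/x₀‖ ≤ 1 := by rw [norm_div]; exact div_le_one_of_le₀ hb2 (norm_nonneg _)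
  have hU3 : ‖u₃/x₀‖ ≤ 1 := by rw [norm_div]; exact div_le_one_of_le₀ hb3 (norm_nonneg _)
  refine ⟨⟨t/x₀, hT⟩, ⟨u₁/x₀, hU1⟩, ⟨u₂/x₀, hU2⟩, ⟨u₃/x₀, hU3⟩, ?_, ?_, ?_⟩
  · rintro ⟨hd1, hd2, hd3, hd4⟩
    have d1' : ‖t/x₀‖ < 1 := (PadicInt.norm_lt_one_iff_dvd _).mpr (by exact_mod_cast hd1)
    have d2' : ‖u₁/x₀‖ < 1 := (PadicInt.norm_lt_one_iff_dvd _).mpr (by exact_mod_cast hd2)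
    have d3' : ‖u₂/x₀‖ < 1 := (PadicInt.norm_lt_one_iff_dvd _).mpr (by exact_mod_cast hd3)
    have d4' : ‖u₃/x₀‖ < 1 := (PadicInt.norm_lt_one_iff_dvd _).mpr (by exact_mod_cast hd4)
    have hone : ‖x₀/x₀‖ < 1 := by
      rcases hmem with h | h | h | h
      · rw [h] at d1' ⊢; exact d1'
      · rw [h] at d2' ⊢; exact d2'
      · rw [h] at d3' ⊢; exact d3'
      · rw [h] at d4' ⊢; exact d4'
    rw [div_self hx0, norm_one] at hone
    exact lt_irrefl _ hone
  · apply PadicInt.ext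
    push_cast
    show (A:ℚ_[2])^2 * N * (t/x₀)^2 + D₁*(u₁/x₀)^2 = D₃*(u₃/x₀)^2
    linear_combination (x₀⁻¹)^2 * E2
  · apply PadicInt.ext
    push_cast
    show 2*(C:ℚ_[2])^2 * N * (t/x₀)^2 + D₁*(u₁/x₀)^2 = D₂*(u₂/x₀)^2
    linear_combination (x₀⁻¹)^2 * E3

end Stmt4Aux

lemma descentA (a c n : ℕ) (ha : ¬ 2 ∣ a) (hn : ¬ 2 ∣ n)
    (e₁ d₂ e₃ : ℤ) (he₁ : ¬ (2:ℤ) ∣ e₁) (hd₂ : ¬ (2:ℤ) ∣ d₂) (he₃ : ¬ (2:ℤ) ∣ e₃)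
    (T U₁ U₂ U₃ : ℤ_[2])
    (E2 : (a:ℤ_[2])^2 * n * T^2 + 2*e₁*U₁^2 = 2*(e₃:ℤ_[2])*U₃^2)
    (E3 : 2*(c:ℤ_[2])^2 * n * T^2 + 2*e₁*U₁^2 = (d₂:ℤ_[2])*U₂^2) :
    (2:ℤ_[2]) ∣ T ∧ (2:ℤ_[2]) ∣ U₁ ∧ (2:ℤ_[2]) ∣ U₂ ∧ (2:ℤ_[2]) ∣ U₃ := by
  have p2 := stmt4_prime_two
  have haz : ¬ (2:ℤ_[2]) ∣ (a:ℤ_[2]) := by rw [stmt4_two_dvd_cast_nat]; exact ha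
  have hnz : ¬ (2:ℤ_[2]) ∣ (n:ℤ_[2]) := by rw [stmt4_two_dvd_cast_nat]; exact hn
  have he₁z : ¬ (2:ℤ_[2]) ∣ (e₁:ℤ_[2]) := by rw [stmt4_two_dvd_cast]; exact he₁
  have hd₂z : ¬ (2:ℤ_[2]) ∣ (d₂:ℤ_[2]) := by rw [stmt4_two_dvd_cast]; exact hd₂
  have he₃z : ¬ (2:ℤ_[2]) ∣ (e₃:ℤ_[2]) := by rw [stmt4_two_dvd_cast]; exact he₃
  have two_ne : (2:ℤ_[2]) ≠ 0 := two_ne_zero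
  -- step 1 : 2 ∣ T
  have hT : (2:ℤ_[2]) ∣ T := by
    have hdvd : (2:ℤ_[2]) ∣ (a:ℤ_[2])^2 * n * T^2 :=
      ⟨(e₃:ℤ_[2])*U₃^2 - e₁*U₁^2, by linear_combination E2⟩
    rcases (p2.dvd_mul.mp hdvd) with h | h
    · rcases p2.dvd_mul.mp h with h' | h'
      · exact absurd (p2.dvd_of_dvd_pow h') haz
      · exact absurd h' hnz
    · exact p2.dvd_of_dvd_pow h
  -- step 2 : 2 ∣ U₂
  have hU₂ : (2:ℤ_[2]) ∣ U₂ := by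
    have hdvd : (2:ℤ_[2]) ∣ (d₂:ℤ_[2]) * U₂^2 :=
      ⟨(c:ℤ_[2])^2*n*T^2 + e₁*U₁^2, by linear_combination -E3⟩
    rcases p2.dvd_mul.mp hdvd with h | h
    · exact absurd h hd₂z
    · exact p2.dvd_of_dvd_pow h
  obtain ⟨T', rfl⟩ := hT
  obtain ⟨V₂, rfl⟩ := hU₂
  -- step 3 : 2 ∣ U₁
  have key3 : 4*(c:ℤ_[2])^2*n*T'^2 + e₁*U₁^2 = 2*(d₂:ℤ_[2])*V₂^2 := by
    apply mul_left_cancel₀ two_ne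
    linear_combination E3
  have hU₁ : (2:ℤ_[2]) ∣ U₁ := by
    have hdvd : (2:ℤ_[2]) ∣ (e₁:ℤ_[2]) * U₁^2 :=
      ⟨(d₂:ℤ_[2])*V₂^2 - 2*(c:ℤ_[2])^2*n*T'^2, by linear_combination key3⟩
    rcases p2.dvd_mul.mp hdvd with h | h
    · exact absurd h he₁z
    · exact p2.dvd_of_dvd_pow h
  -- step 4 : 2 ∣ U₃
  have key4 : 2*(a:ℤ_[2])^2*n*T'^2 + e₁*U₁^2 = (e₃:ℤ_[2])*U₃^2 := by
    apply mul_left_cancel₀ two_ne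
    linear_combination E2
  have hU₃ : (2:ℤ_[2]) ∣ U₃ := by
    obtain ⟨V₁, rfl⟩ := hU₁
    have hdvd : (2:ℤ_[2]) ∣ (e₃:ℤ_[2]) * U₃^2 :=
      ⟨(a:ℤ_[2])^2*n*T'^2 + 2*e₁*V₁^2, by linear_combination -key4⟩
    rcases p2.dvd_mul.mp hdvd with h | h
    · exact absurd h he₃z
    · exact p2.dvd_of_dvd_pow h
  exact ⟨⟨T', rfl⟩, hU₁, ⟨V₂, rfl⟩, hU₃⟩

lemma descentB (a c n : ℕ) (ha : ¬ 2 ∣ a) (hn : ¬ 2 ∣ n)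
    (d₁ e₂ e₃ : ℤ) (hd₁ : ¬ (2:ℤ) ∣ d₁) (he₂ : ¬ (2:ℤ) ∣ e₂) (he₃ : ¬ (2:ℤ) ∣ e₃)
    (T U₁ U₂ U₃ : ℤ_[2])
    (E2 : (a:ℤ_[2])^2 * n * T^2 + (d₁:ℤ_[2])*U₁^2 = 2*(e₃:ℤ_[2])*U₃^2)
    (E3 : 2*(c:ℤ_[2])^2 * n * T^2 + (d₁:ℤ_[2])*U₁^2 = 2*(e₂:ℤ_[2])*U₂^2) :
    (2:ℤ_[2]) ∣ T ∧ (2:ℤ_[2]) ∣ U₁ ∧ (2:ℤ_[2]) ∣ U₂ ∧ (2:ℤ_[2]) ∣ U₃ := by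
  have p2 := stmt4_prime_two
  have haz : ¬ (2:ℤ_[2]) ∣ (a:ℤ_[2]) := by rw [stmt4_two_dvd_cast_nat]; exact ha
  have hnz : ¬ (2:ℤ_[2]) ∣ (n:ℤ_[2]) := by rw [stmt4_two_dvd_cast_nat]; exact hn
  have hd₁z : ¬ (2:ℤ_[2]) ∣ (d₁:ℤ_[2]) := by rw [stmt4_two_dvd_cast]; exact hd₁
  have he₂z : ¬ (2:ℤ_[2]) ∣ (e₂:ℤ_[2]) := by rw [stmt4_two_dvd_cast]; exact he₂
  have he₃z : ¬ (2:ℤ_[2]) ∣ (e₃:ℤ_[2]) := by rw [stmt4_two_dvd_cast]; exact he₃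
  have two_ne : (2:ℤ_[2]) ≠ 0 := two_ne_zero
  have hU₁ : (2:ℤ_[2]) ∣ U₁ := by
    have hdvd : (2:ℤ_[2]) ∣ (d₁:ℤ_[2]) * U₁^2 :=
      ⟨(e₂:ℤ_[2])*U₂^2 - (c:ℤ_[2])^2*n*T^2, by linear_combination E3⟩
    rcases p2.dvd_mul.mp hdvd with h | h
    · exact absurd h hd₁z
    · exact p2.dvd_of_dvd_pow h
  obtain ⟨V₁, rfl⟩ := hU₁
  have hT : (2:ℤ_[2]) ∣ T := by
    have hdvd : (2:ℤ_[2]) ∣ (a:ℤ_[2])^2 * n * T^2 :=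
      ⟨(e₃:ℤ_[2])*U₃^2 - 2*d₁*V₁^2, by linear_combination E2⟩
    rcases (p2.dvd_mul.mp hdvd) with h | h
    · rcases p2.dvd_mul.mp h with h' | h'
      · exact absurd (p2.dvd_of_dvd_pow h') haz
      · exact absurd h' hnz
    · exact p2.dvd_of_dvd_pow h
  obtain ⟨T', rfl⟩ := hT
  have key3 : 4*(c:ℤ_[2])^2*n*T'^2 + 2*(d₁:ℤ_[2])*V₁^2 = (e₂:ℤ_[2])*U₂^2 := by
    apply mul_left_cancel₀ two_ne
    linear_combination E3
  have hU₂ : (2:ℤ_[2]) ∣ U₂ := by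
    have hdvd : (2:ℤ_[2]) ∣ (e₂:ℤ_[2]) * U₂^2 :=
      ⟨2*(c:ℤ_[2])^2*n*T'^2 + d₁*V₁^2, by linear_combination -key3⟩
    rcases p2.dvd_mul.mp hdvd with h | h
    · exact absurd h he₂z
    · exact p2.dvd_of_dvd_pow h
  have key4 : 2*(a:ℤ_[2])^2*n*T'^2 + 2*(d₁:ℤ_[2])*V₁^2 = (e₃:ℤ_[2])*U₃^2 := by
    apply mul_left_cancel₀ two_ne
    linear_combination E2
  have hU₃ : (2:ℤ_[2]) ∣ U₃ := by
    have hdvd : (2:ℤ_[2]) ∣ (e₃:ℤ_[2]) * U₃^2 :=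
      ⟨(a:ℤ_[2])^2*n*T'^2 + d₁*V₁^2, by linear_combination -key4⟩
    rcases p2.dvd_mul.mp hdvd with h | h
    · exact absurd h he₃z
    · exact p2.dvd_of_dvd_pow h
  exact ⟨⟨T', rfl⟩, ⟨V₁, rfl⟩, hU₂, hU₃⟩


lemma odd_reduce : ∀ a : ℕ, ∀ b c : ℕ, 0 < a → a^2 + b^2 = 2*c^2 →
    ∃ k a₀ b₀ c₀ : ℕ, a = 2^k*a₀ ∧ b = 2^k*b₀ ∧ c = 2^k*c₀ ∧ ¬2∣a₀ ∧ ¬2∣b₀ ∧ ¬2∣c₀ := by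
  intro a
  induction a using Nat.strong_induction_on with
  | _ a ih =>
    intro b c hapos heq
    have hz : (a:ℤ)^2 + (b:ℤ)^2 = 2*(c:ℤ)^2 := by exact_mod_cast heq
    by_cases h2a : 2 ∣ a
    · obtain ⟨a', rfl⟩ := h2a
      push_cast at hz
      have h2b : 2 ∣ b := by
        have h' : (2:ℤ) ∣ (b:ℤ)^2 := ⟨(c:ℤ)^2 - 2*(a':ℤ)^2, by linear_combination hz⟩
        have := Int.prime_two.dvd_of_dvd_pow h'
        exact_mod_cast this
      obtain ⟨b', rfl⟩ := h2b
      push_cast at hz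
      have hc2 : (c:ℤ)^2 = 2*((a':ℤ)^2 + (b':ℤ)^2) := by
        apply mul_left_cancel₀ (two_ne_zero (α := ℤ))
        linear_combination -hz
      have h2c : 2 ∣ c := by
        have h' : (2:ℤ) ∣ (c:ℤ)^2 := ⟨(a':ℤ)^2 + (b':ℤ)^2, hc2⟩
        have := Int.prime_two.dvd_of_dvd_pow h'
        exact_mod_cast this
      obtain ⟨c', rfl⟩ := h2c
      push_cast at hc2
      have heq' : a'^2 + b'^2 = 2*c'^2 := by
        have h' : (a':ℤ)^2 + (b':ℤ)^2 = 2*(c':ℤ)^2 := by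
          apply mul_left_cancel₀ (two_ne_zero (α := ℤ))
          linear_combination -hc2
        exact_mod_cast h'
      have ha'pos : 0 < a' := by omega
      obtain ⟨k, a₀, b₀, c₀, h1, h2, h3, h4, h5, h6⟩ := ih a' (by omega) b' c' ha'pos heq'
      exact ⟨k+1, a₀, b₀, c₀, by rw [h1]; ring, by rw [h2]; ring, by rw [h3]; ring, h4, h5, h6⟩
    · -- a odd; show b, c odd
      have h2b : ¬ 2 ∣ b := by
        intro hdvd
        obtain ⟨b', rfl⟩ := hdvd
        push_cast at hz
        have h' : (2:ℤ) ∣ (a:ℤ)^2 := ⟨(c:ℤ)^2 - 2*(b':ℤ)^2, by linear_combination hz⟩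
        have := Int.prime_two.dvd_of_dvd_pow h'
        exact h2a (by exact_mod_cast this)
      have h2c : ¬ 2 ∣ c := by
        intro hdvd
        obtain ⟨x, hx⟩ : ∃ x, a = 2*x+1 := ⟨a/2, by omega⟩
        obtain ⟨y, hy⟩ : ∃ y, b = 2*y+1 := ⟨b/2, by omega⟩
        obtain ⟨c', rfl⟩ := hdvd
        subst hx hy
        push_cast at hz
        have key : (2:ℤ)*(2*(x:ℤ)^2+2*x+2*(y:ℤ)^2+2*y+1) = 2*(4*(c':ℤ)^2) := by
          linear_combination hz
        have key2 : (2*(x:ℤ)^2+2*x+2*(y:ℤ)^2+2*y+1) = 4*(c':ℤ)^2 :=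
          mul_left_cancel₀ (two_ne_zero (α := ℤ)) key
        have hbad : (2:ℤ) ∣ 1 := ⟨2*(c':ℤ)^2 - ((x:ℤ)^2+x+(y:ℤ)^2+y), by linear_combination key2⟩
        norm_num at hbad
      exact ⟨0, a, b, c, by simp, by simp, by simp, h2a, h2b, h2c⟩

/-- if the homogeneous space has a nonzero 2-adic point,
then d₁ and d₂ have the same parity. -/
theorem stmt4 (a b c n : ℕ) (ha : 0 < a) (hb : 0 < b) (hc : 0 < c) (hn : 0 < n)
    (h : a ^ 2 + b ^ 2 = 2 * c ^ 2) (hcop : Nat.gcd n (2 * a * b * c) = 1)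
    (hsf : Squarefree n)
    (d₁ d₂ d₃ : ℤ) (h1 : Squarefree d₁) (h2 : Squarefree d₂) (h3 : Squarefree d₃)
    (hsq : ∃ m : ℤ, d₁ * d₂ * d₃ = m ^ 2)
    (hsol : ∃ t u₁ u₂ u₃ : ℚ_[2], ¬(t = 0 ∧ u₁ = 0 ∧ u₂ = 0 ∧ u₃ = 0) ∧
      -(b : ℚ_[2]) ^ 2 * (n : ℚ_[2]) * t ^ 2 + (d₂ : ℚ_[2]) * u₂ ^ 2 - (d₃ : ℚ_[2]) * u₃ ^ 2 = 0 ∧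
      -(a : ℚ_[2]) ^ 2 * (n : ℚ_[2]) * t ^ 2 + (d₃ : ℚ_[2]) * u₃ ^ 2 - (d₁ : ℚ_[2]) * u₁ ^ 2 = 0 ∧
      2 * (c : ℚ_[2]) ^ 2 * (n : ℚ_[2]) * t ^ 2 + (d₁ : ℚ_[2]) * u₁ ^ 2 - (d₂ : ℚ_[2]) * u₂ ^ 2 = 0) :
    d₁ % 2 = d₂ % 2 := by
  by_contra hne
  -- n is odd
  have hn2 : ¬ 2 ∣ n := by
    intro h2n
    have h2' : 2 ∣ Nat.gcd n (2 * a * b * c) := Nat.dvd_gcd h2n ⟨a * b * c, by ring⟩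
    omega
  -- reduce a, b, c to the odd case
  obtain ⟨k, a₀, b₀, c₀, hA, hB, hC, ha₀, hb₀, hc₀⟩ := odd_reduce a b c ha h
  obtain ⟨t, u₁, u₂, u₃, hnz, E1, E2, E3⟩ := hsol
  have hacast : (a : ℚ_[2]) = 2 ^ k * (a₀ : ℚ_[2]) := by rw [hA]; push_cast; ring
  have hccast : (c : ℚ_[2]) = 2 ^ k * (c₀ : ℚ_[2]) := by rw [hC]; push_cast; ring
  have E2' : (a₀ : ℚ_[2]) ^ 2 * (n : ℚ_[2]) * (2 ^ k * t) ^ 2 + (d₁ : ℚ_[2]) * u₁ ^ 2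
      = (d₃ : ℚ_[2]) * u₃ ^ 2 := by
    rw [hacast] at E2
    linear_combination -E2
  have E3' : 2 * (c₀ : ℚ_[2]) ^ 2 * (n : ℚ_[2]) * (2 ^ k * t) ^ 2 + (d₁ : ℚ_[2]) * u₁ ^ 2
      = (d₂ : ℚ_[2]) * u₂ ^ 2 := by
    rw [hccast] at E3
    linear_combination E3
  have hnz' : ¬(2 ^ k * t = 0 ∧ u₁ = 0 ∧ u₂ = 0 ∧ u₃ = 0) := by
    rintro ⟨h0, hh1, hh2, hh3⟩
    have hp : (2 : ℚ_[2]) ^ k ≠ 0 := pow_ne_zero _ two_ne_zero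
    exact hnz ⟨(mul_eq_zero.mp h0).resolve_left hp, hh1, hh2, hh3⟩
  obtain ⟨T, U₁, U₂, U₃, hunit, E2Z, E3Z⟩ :=
    stmt4_lift a₀ c₀ n d₁ d₂ d₃ (2 ^ k * t) u₁ u₂ u₃ hnz' E2' E3'
  -- parity case analysis
  have hd12 : (d₁ % 2 = 0 ∧ d₂ % 2 = 1) ∨ (d₁ % 2 = 1 ∧ d₂ % 2 = 0) := by
    have := Int.emod_two_eq d₁
    have := Int.emod_two_eq d₂
    omega
  obtain ⟨m, hm⟩ := hsq
  rcases hd12 with ⟨hp1, hp2⟩ | ⟨hp1, hp2⟩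
  · -- d₁ even, d₂ odd, hence d₃ even
    have hdvd1 : (2:ℤ) ∣ d₁ := by omega
    have hnd2 : ¬ (2:ℤ) ∣ d₂ := by omega
    obtain ⟨e₁, he₁eq⟩ := hdvd1
    have hne₁ : ¬ (2:ℤ) ∣ e₁ := by
      rintro ⟨f, rfl⟩
      have := h1 2 ⟨f, by rw [he₁eq]; ring⟩
      rw [Int.isUnit_iff] at this
      omega
    have h2m : (2:ℤ) ∣ m := by
      refine Int.prime_two.dvd_of_dvd_pow (n := 2) ?_
      rw [← hm, he₁eq]
      exact ⟨e₁ * d₂ * d₃, by ring⟩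
    obtain ⟨m', rfl⟩ := h2m
    have hkey : e₁ * d₂ * d₃ = 2 * m' ^ 2 := by
      apply mul_left_cancel₀ (two_ne_zero (α := ℤ))
      rw [he₁eq] at hm
      linear_combination hm
    have hdvd3 : (2:ℤ) ∣ d₃ := by
      have hd : (2:ℤ) ∣ e₁ * d₂ * d₃ := ⟨m' ^ 2, hkey⟩
      rcases (Int.prime_two.dvd_mul).mp hd with hh | hh
      · rcases (Int.prime_two.dvd_mul).mp hh with hh' | hh'
        · exact absurd hh' hne₁
        · exact absurd hh' hnd2
      · exact hh
    obtain ⟨e₃, he₃eq⟩ := hdvd3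
    have hne₃ : ¬ (2:ℤ) ∣ e₃ := by
      rintro ⟨f, rfl⟩
      have := h3 2 ⟨f, by rw [he₃eq]; ring⟩
      rw [Int.isUnit_iff] at this
      omega
    have hc₁ : (d₁ : ℤ_[2]) = 2 * (e₁ : ℤ_[2]) := by rw [he₁eq]; push_cast; ring
    have hc₃ : (d₃ : ℤ_[2]) = 2 * (e₃ : ℤ_[2]) := by rw [he₃eq]; push_cast; ring
    rw [hc₁, hc₃] at E2Z
    rw [hc₁] at E3Z
    exact hunit (descentA a₀ c₀ n ha₀ hn2 e₁ d₂ e₃ hne₁ hnd2 hne₃ T U₁ U₂ U₃ E2Z E3Z)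
  · -- d₂ even, d₁ odd, hence d₃ even
    have hdvd2 : (2:ℤ) ∣ d₂ := by omega
    have hnd1 : ¬ (2:ℤ) ∣ d₁ := by omega
    obtain ⟨e₂, he₂eq⟩ := hdvd2
    have hne₂ : ¬ (2:ℤ) ∣ e₂ := by
      rintro ⟨f, rfl⟩
      have := h2 2 ⟨f, by rw [he₂eq]; ring⟩
      rw [Int.isUnit_iff] at this
      omega
    have h2m : (2:ℤ) ∣ m := by
      refine Int.prime_two.dvd_of_dvd_pow (n := 2) ?_
      rw [← hm, he₂eq]
      exact ⟨d₁ * e₂ * d₃, by ring⟩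
    obtain ⟨m', rfl⟩ := h2m
    have hkey : d₁ * e₂ * d₃ = 2 * m' ^ 2 := by
      apply mul_left_cancel₀ (two_ne_zero (α := ℤ))
      rw [he₂eq] at hm
      linear_combination hm
    have hdvd3 : (2:ℤ) ∣ d₃ := by
      have hd : (2:ℤ) ∣ d₁ * e₂ * d₃ := ⟨m' ^ 2, hkey⟩
      rcases (Int.prime_two.dvd_mul).mp hd with hh | hh
      · rcases (Int.prime_two.dvd_mul).mp hh with hh' | hh'
        · exact absurd hh' hnd1
        · exact absurd hh' hne₂
      · exact hh
    obtain ⟨e₃, he₃eq⟩ := hdvd3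
    have hne₃ : ¬ (2:ℤ) ∣ e₃ := by
      rintro ⟨f, rfl⟩
      have := h3 2 ⟨f, by rw [he₃eq]; ring⟩
      rw [Int.isUnit_iff] at this
      omega
    have hc₂ : (d₂ : ℤ_[2]) = 2 * (e₂ : ℤ_[2]) := by rw [he₂eq]; push_cast; ring
    have hc₃ : (d₃ : ℤ_[2]) = 2 * (e₃ : ℤ_[2]) := by rw [he₃eq]; push_cast; ring
    rw [hc₃] at E2Z
    rw [hc₂] at E3Z
    exact hunit (descentB a₀ c₀ n ha₀ hn2 d₁ e₂ e₃ hnd1 hne₂ hne₃ T U₁ U₂ U₃ E2Z E3Z)
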